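/- For y ∈ [2.26, 2.51], define vor(S_y) = −8·δ_oct·y²/((12−y²)^(1/2)·(16−y²)) + (8/3)·arctan((12−y²)^(1/2)·y²/(64−6y²)). Then vor(S_y) is decreasing in y on the interval [2.26, 2.41]. -/

import Mathlib

noncomputable section
open Real

/-- δ_oct = (−3π + 12 arccos(1/√3))/(2√2) ≈ 0.720903. -/
def deltaOct : ℝ := (-3*π + 12*Real.arccos (1/Real.sqrt 3)) / (2*Real.sqrt 2)

/-- The explicit formula (9.17.4) for vor(S_y), where S_y = S(2,2,2,y,y,y). -/
def vorS (y : ℝ) : ℝ :=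
  -8*deltaOct*y^2 / (Real.sqrt (12 - y^2) * (16 - y^2)) +
    (8/3) * Real.arctan (Real.sqrt (12 - y^2) * y^2 / (64 - 6*y^2))

lemma sqrt2_lt : Real.sqrt 2 < 1.41422 := by
  rw [show (1.41422:ℝ) = Real.sqrt (1.41422^2) by rw [Real.sqrt_sq]; norm_num]
  exact Real.sqrt_lt_sqrt (by norm_num) (by norm_num)

lemma sqrt3_gt : (1.73205:ℝ) < Real.sqrt 3 := by
  rw [show (1.73205:ℝ) = Real.sqrt (1.73205^2) by rw [Real.sqrt_sq]; norm_num]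
  exact Real.sqrt_lt_sqrt (by norm_num) (by norm_num)

lemma arccos_gt : (0.917:ℝ) < Real.arccos (1/Real.sqrt 3) := by
  have h3 := sqrt3_gt
  have h3' : (0:ℝ) < Real.sqrt 3 := by linarith
  have hlt : (1:ℝ)/Real.sqrt 3 < Real.cos 0.917 := by
    have hc := Real.one_sub_sq_div_two_le_cos (x := 0.917)
    have : (1:ℝ)/Real.sqrt 3 < 0.57736 := by
      rw [div_lt_iff₀ h3']; nlinarith
    nlinarith
  have hmem1 : (1:ℝ)/Real.sqrt 3 ∈ Set.Icc (-1:ℝ) 1 := by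
    constructor
    · have : (0:ℝ) < 1/Real.sqrt 3 := by positivity
      linarith
    · rw [div_le_one h3']; linarith
  have hmem2 : Real.cos 0.917 ∈ Set.Icc (-1:ℝ) 1 := ⟨Real.neg_one_le_cos _, Real.cos_le_one _⟩
  have := Real.strictAntiOn_arccos hmem1 hmem2 hlt
  rwa [Real.arccos_cos (by norm_num) (by nlinarith [Real.pi_gt_three])] at this

lemma deltaOct_gt : (0.55:ℝ) < deltaOct := by
  have h2 := sqrt2_lt
  have h2' : (0:ℝ) < Real.sqrt 2 := Real.sqrt_pos.2 (by norm_num)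
  have hpi := Real.pi_lt_d6
  have ha := arccos_gt
  rw [deltaOct, lt_div_iff₀ (by positivity)]
  nlinarith

lemma hasDerivAt_vorS {y : ℝ} (h1 : 2 ≤ y) (h2 : y ≤ 2.5) :
    HasDerivAt vorS
      (16*y/(Real.sqrt (12 - y^2)*(16 - y^2)) *
        (1 - deltaOct*(1 + y^2/(2*(12 - y^2)) + y^2/(16 - y^2)))) y := by
  have hy0 : (0:ℝ) < y := by linarith
  have ht1 : y^2 ≤ 6.25 := by nlinarith
  have ht0 : 4 ≤ y^2 := by nlinarith
  have h12 : (0:ℝ) < 12 - y^2 := by linarith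
  have h16 : (0:ℝ) < 16 - y^2 := by linarith
  have h64 : (0:ℝ) < 64 - 6*y^2 := by linarith
  set s := Real.sqrt (12 - y^2) with hs_def
  have hs0 : 0 < s := Real.sqrt_pos.2 h12
  have hs2 : s^2 = 12 - y^2 := Real.sq_sqrt h12.le
  -- derivative of 12 - y^2
  have hu : HasDerivAt (fun x : ℝ => 12 - x^2) (-(2*y)) y := by
    simpa using (hasDerivAt_pow 2 y).const_sub 12
  -- derivative of sqrt(12 - y^2)
  have hsq : HasDerivAt (fun x : ℝ => Real.sqrt (12 - x^2)) (-(2*y)/(2*s)) y :=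
    hu.sqrt h12.ne'
  -- Term A
  have hnum : HasDerivAt (fun x : ℝ => -8*deltaOct*x^2) (-8*deltaOct*(2*y)) y := by
    simpa [mul_comm, mul_assoc] using (hasDerivAt_pow 2 y).const_mul (-8*deltaOct)
  have h16d : HasDerivAt (fun x : ℝ => 16 - x^2) (-(2*y)) y := by
    simpa using (hasDerivAt_pow 2 y).const_sub 16
  have hden : HasDerivAt (fun x : ℝ => Real.sqrt (12 - x^2) * (16 - x^2))
      (-(2*y)/(2*s) * (16 - y^2) + s * -(2*y)) y := hsq.mul h16d
  have hdenne : s * (16 - y^2) ≠ 0 := by positivity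
  have hA : HasDerivAt (fun x : ℝ => -8*deltaOct*x^2 / (Real.sqrt (12 - x^2) * (16 - x^2)))
      ((-8*deltaOct*(2*y) * (s*(16 - y^2)) -
        (-8*deltaOct*y^2) * (-(2*y)/(2*s) * (16 - y^2) + s * -(2*y))) / (s*(16 - y^2))^2) y :=
    hnum.div hden hdenne
  -- clean form of A'
  have hAval : ((-8*deltaOct*(2*y) * (s*(16 - y^2)) -
        (-8*deltaOct*y^2) * (-(2*y)/(2*s) * (16 - y^2) + s * -(2*y))) / (s*(16 - y^2))^2)
      = -16*deltaOct*y/(s*(16 - y^2)) * (1 + y^2/(2*(12 - y^2)) + y^2/(16 - y^2)) := by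
    have hsne := hs0.ne'
    field_simp
    rw [hs2]
    ring
  -- Term B
  have hp2 : HasDerivAt (fun x : ℝ => x^2) (2*y) y := by simpa using hasDerivAt_pow 2 y
  have hnum2 : HasDerivAt (fun x : ℝ => Real.sqrt (12 - x^2) * x^2)
      (-(2*y)/(2*s) * y^2 + s * (2*y)) y := hsq.mul hp2
  have hden2 : HasDerivAt (fun x : ℝ => 64 - 6*x^2) (-(6*(2*y))) y := by
    simpa using (hp2.const_mul 6).const_sub 64
  have hw : HasDerivAt (fun x : ℝ => Real.sqrt (12 - x^2) * x^2 / (64 - 6*x^2))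
      (((-(2*y)/(2*s) * y^2 + s * (2*y)) * (64 - 6*y^2) - (s * y^2) * (-(6*(2*y)))) /
        (64 - 6*y^2)^2) y := hnum2.div hden2 h64.ne'
  have hwval : ((-(2*y)/(2*s) * y^2 + s * (2*y)) * (64 - 6*y^2) - (s * y^2) * (-(6*(2*y)))) /
        (64 - 6*y^2)^2 = 6*y*(16 - y^2)^2/(s*(64 - 6*y^2)^2) := by
    have hsne := hs0.ne'
    have h64ne := h64.ne'
    field_simp
    rw [hs2]
    ring
  rw [hwval] at hw
  have harc := hw.arctan
  have hB := harc.const_mul (8/3 : ℝ)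
  have h1w : 1 + (Real.sqrt (12 - y^2) * y^2 / (64 - 6*y^2))^2
      = (16 - y^2)^3/(64 - 6*y^2)^2 := by
    rw [div_pow, mul_pow, ← hs_def, hs2]
    have h64ne : 64 - 6*y^2 ≠ 0 := h64.ne'
    have h64ne' : 64 - y^2*6 ≠ 0 := (by linarith : (0:ℝ) < 64 - y^2*6).ne'
    field_simp
    ring
  have hBval : (8/3 : ℝ) * (1 / (1 + (Real.sqrt (12 - y^2) * y^2 / (64 - 6*y^2))^2) *
      (6*y*(16 - y^2)^2/(s*(64 - 6*y^2)^2))) = 16*y/(s*(16 - y^2)) := by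
    rw [h1w]
    have hsne := hs0.ne'
    have h64ne : 64 - 6*y^2 ≠ 0 := h64.ne'
    have h64ne' : 64 - y^2*6 ≠ 0 := (by linarith : (0:ℝ) < 64 - y^2*6).ne'
    field_simp
    ring
  rw [hAval] at hA
  rw [hBval] at hB
  have htot := hA.add hB
  have hfinal : -16*deltaOct*y/(s*(16 - y^2)) * (1 + y^2/(2*(12 - y^2)) + y^2/(16 - y^2))
      + 16*y/(s*(16 - y^2))
      = 16*y/(s*(16 - y^2)) * (1 - deltaOct*(1 + y^2/(2*(12 - y^2)) + y^2/(16 - y^2))) := by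
    ring
  rw [hfinal] at htot
  exact htot

/-- vor(S_y) is decreasing in y on [2.26, 2.41]. -/
theorem vorS_strictAntiOn : StrictAntiOn vorS (Set.Icc (2.26:ℝ) 2.41) := by
  apply strictAntiOn_of_deriv_neg (convex_Icc _ _)
  · intro x hx
    exact (hasDerivAt_vorS (by linarith [hx.1]) (by linarith [hx.2])).continuousAt.continuousWithinAt
  · intro x hx
    rw [interior_Icc] at hx
    obtain ⟨hx1, hx2⟩ := hx
    have hD := hasDerivAt_vorS (y := x) (by linarith) (by linarith)
    rw [hD.deriv]
    have hx0 : (0:ℝ) < x := by linarith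
    have ht0 : (5.1076:ℝ) ≤ x^2 := by nlinarith
    have ht1 : x^2 ≤ 5.8081 := by nlinarith
    have h12 : (0:ℝ) < 12 - x^2 := by linarith
    have h16 : (0:ℝ) < 16 - x^2 := by linarith
    have hs0 : 0 < Real.sqrt (12 - x^2) := Real.sqrt_pos.2 h12
    apply mul_neg_of_pos_of_neg
    · exact div_pos (by linarith) (mul_pos hs0 h16)
    · have hd := deltaOct_gt
      have ha : (0.3705:ℝ) ≤ x^2/(2*(12 - x^2)) := by
        rw [le_div_iff₀ (by linarith)]; nlinarith
      have hb : (0.4689:ℝ) ≤ x^2/(16 - x^2) := by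
        rw [le_div_iff₀ h16]; nlinarith
      nlinarith [ha, hb, hd]
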